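/- Every vertex of the ι-invariant Birkhoff polytope B_d^ι is the image under the linear map M ↦ (M + ιM)/2 of some vertex of the Birkhoff polytope B_d; consequently every entry of a vertex of B_d^ι lies in {0, 1/2, 1}. -/
import Mathlib


/-- The `ι`-invariant Birkhoff polytope for the involution `(ιM)_{ij} = M_{φ(i)ψ(j)}`. -/
def invBirkhoff (d : ℕ) (φ ψ : Equiv.Perm (Fin d)) : Set (Matrix (Fin d) (Fin d) ℝ) :=
  {M | M ∈ doublyStochastic ℝ (Fin d) ∧ (fun i j => M (φ i) (ψ j)) = M}

open Matrix Finset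

namespace Stmt5Aux

variable {d : ℕ}

/-- The symmetrization `M ↦ (M + ιM)/2` as a linear map. -/
noncomputable def T (φ ψ : Equiv.Perm (Fin d)) :
    Matrix (Fin d) (Fin d) ℝ →ₗ[ℝ] Matrix (Fin d) (Fin d) ℝ where
  toFun X := (2 : ℝ)⁻¹ • (X + Matrix.of fun i j => X (φ i) (ψ j))
  map_add' X Y := by
    ext i j
    simp [Matrix.add_apply, Matrix.smul_apply]
    ring
  map_smul' c X := by
    ext i j
    simp [Matrix.smul_apply, Matrix.add_apply]
    ring

lemma T_apply (φ ψ : Equiv.Perm (Fin d)) (X : Matrix (Fin d) (Fin d) ℝ) (i j : Fin d) :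
    T φ ψ X i j = (2 : ℝ)⁻¹ * (X i j + X (φ i) (ψ j)) := by
  simp [T, Matrix.smul_apply, Matrix.add_apply]
  ring

lemma iota_mem (φ ψ : Equiv.Perm (Fin d)) {X : Matrix (Fin d) (Fin d) ℝ}
    (hX : X ∈ doublyStochastic ℝ (Fin d)) :
    (Matrix.of fun i j => X (φ i) (ψ j)) ∈ doublyStochastic ℝ (Fin d) := by
  rw [mem_doublyStochastic_iff_sum] at hX ⊢
  refine ⟨fun i j => hX.1 _ _, fun i => ?_, fun j => ?_⟩
  · simpa using (Equiv.sum_comp ψ (fun j => X (φ i) j)).trans (hX.2.1 (φ i))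
  · simpa using (Equiv.sum_comp φ (fun i => X i (ψ j))).trans (hX.2.2 (ψ j))

lemma T_mem (φ ψ : Equiv.Perm (Fin d)) {X : Matrix (Fin d) (Fin d) ℝ}
    (hX : X ∈ doublyStochastic ℝ (Fin d)) :
    T φ ψ X ∈ doublyStochastic ℝ (Fin d) := by
  have h := convex_doublyStochastic (R := ℝ) (n := Fin d) hX (iota_mem φ ψ hX)
    (by norm_num : (0:ℝ) ≤ 2⁻¹) (by norm_num : (0:ℝ) ≤ 2⁻¹) (by norm_num)
  have : T φ ψ X = (2 : ℝ)⁻¹ • X + (2 : ℝ)⁻¹ • (Matrix.of fun i j => X (φ i) (ψ j)) := by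
    simp [T, smul_add]
  rw [this]
  exact h

lemma invBirkhoff_eq_image (φ ψ : Equiv.Perm (Fin d)) (hφ : φ * φ = 1) (hψ : ψ * ψ = 1) :
    invBirkhoff d φ ψ = T φ ψ '' (doublyStochastic ℝ (Fin d)) := by
  have hφ2 : ∀ i, φ (φ i) = i := fun i => by
    have := congrArg (fun e : Equiv.Perm (Fin d) => e i) hφ
    simpa [Equiv.Perm.mul_apply] using this
  have hψ2 : ∀ j, ψ (ψ j) = j := fun j => by
    have := congrArg (fun e : Equiv.Perm (Fin d) => e j) hψ
    simpa [Equiv.Perm.mul_apply] using this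
  ext M
  constructor
  · rintro ⟨hMds, hMinv⟩
    refine ⟨M, hMds, ?_⟩
    ext i j
    rw [T_apply]
    have : M (φ i) (ψ j) = M i j := by
      have := congrFun (congrFun hMinv i) j
      simpa using this
    rw [this]
    ring
  · rintro ⟨X, hX, rfl⟩
    refine ⟨T_mem φ ψ hX, ?_⟩
    funext i j
    rw [T_apply, T_apply, hφ2, hψ2]
    ring

lemma permMatrix_entry (σ : Equiv.Perm (Fin d)) (i j : Fin d) :
    σ.permMatrix ℝ i j = 0 ∨ σ.permMatrix ℝ i j = 1 := by
  by_cases h : σ i = j <;>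
    simp [Equiv.Perm.permMatrix, PEquiv.toMatrix_apply, Equiv.toPEquiv_apply, h]

lemma permMatrix_extreme (σ : Equiv.Perm (Fin d)) :
    σ.permMatrix ℝ ∈ Set.extremePoints ℝ
      (doublyStochastic ℝ (Fin d) : Set (Matrix (Fin d) (Fin d) ℝ)) := by
  rw [mem_extremePoints]
  refine ⟨permMatrix_mem_doublyStochastic, fun x₁ h1 x₂ h2 hseg => ?_⟩
  obtain ⟨a, b, ha, hb, hab, hx⟩ := hseg
  have key : ∀ i j, x₁ i j = σ.permMatrix ℝ i j ∧ x₂ i j = σ.permMatrix ℝ i j := by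
    intro i j
    have e : a * x₁ i j + b * x₂ i j = σ.permMatrix ℝ i j := by
      have := congrFun (congrFun hx i) j
      simpa [Matrix.add_apply, Matrix.smul_apply] using this
    have hp1 : 0 ≤ x₁ i j := nonneg_of_mem_doublyStochastic h1
    have hp2 : 0 ≤ x₂ i j := nonneg_of_mem_doublyStochastic h2
    have hq1 : x₁ i j ≤ 1 := le_one_of_mem_doublyStochastic h1
    have hq2 : x₂ i j ≤ 1 := le_one_of_mem_doublyStochastic h2
    rcases permMatrix_entry σ i j with h0 | h0 <;> rw [h0] at e ⊢
    · constructor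
      · have : x₁ i j ≤ 0 := by nlinarith [mul_nonneg hb.le hp2]
        linarith
      · have : x₂ i j ≤ 0 := by nlinarith [mul_nonneg ha.le hp1]
        linarith
    · constructor
      · have : 1 ≤ x₁ i j := by nlinarith [mul_le_mul_of_nonneg_left hq2 hb.le]
        linarith
      · have : 1 ≤ x₂ i j := by nlinarith [mul_le_mul_of_nonneg_left hq1 ha.le]
        linarith
  constructor
  · ext i j; exact (key i j).1
  · ext i j; exact (key i j).2

end Stmt5Aux

/-- Every vertex of `B_d^ι` is the image under `M ↦ (M + ιM)/2` of a vertex of the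
Birkhoff polytope, and consequently all its entries lie in `{0, 1/2, 1}`. -/
theorem stmt_5 (d : ℕ) (φ ψ : Equiv.Perm (Fin d)) (hφ : φ * φ = 1) (hψ : ψ * ψ = 1)
    (M : Matrix (Fin d) (Fin d) ℝ)
    (hM : M ∈ Set.extremePoints ℝ (invBirkhoff d φ ψ)) :
    (∃ N ∈ Set.extremePoints ℝ
        (doublyStochastic ℝ (Fin d) : Set (Matrix (Fin d) (Fin d) ℝ)),
      M = (2 : ℝ)⁻¹ • (N + Matrix.of fun i j => N (φ i) (ψ j))) ∧
    ∀ i j, M i j = 0 ∨ M i j = 1 / 2 ∨ M i j = 1 := by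
  open Stmt5Aux in
  have key : invBirkhoff d φ ψ = Stmt5Aux.T φ ψ '' (doublyStochastic ℝ (Fin d)) :=
    Stmt5Aux.invBirkhoff_eq_image φ ψ hφ hψ
  rw [key, doublyStochastic_eq_convexHull_permMatrix,
    (Stmt5Aux.T φ ψ).image_convexHull] at hM
  have hMmem := extremePoints_convexHull_subset hM
  obtain ⟨N, ⟨σ, rfl⟩, rfl⟩ := hMmem
  refine ⟨⟨σ.permMatrix ℝ, Stmt5Aux.permMatrix_extreme σ, rfl⟩, fun i j => ?_⟩
  rw [Stmt5Aux.T_apply]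
  rcases Stmt5Aux.permMatrix_entry σ i j with h1 | h1 <;>
    rcases Stmt5Aux.permMatrix_entry σ (φ i) (ψ j) with h2 | h2 <;>
      rw [h1, h2] <;> norm_num
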